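/- Let H be a complex Hilbert space and let M_A and M_B be von Neumann algebras on H that commute (a * b = b * a for all a ∈ M_A, b ∈ M_B) and have the Uhlmann property. Then for every vector Ψ ∈ H, the orthogonal projection (as an element of H →L[ℂ] H) onto the topological closure of the linear span of {b Ψ | b ∈ M_B} is an element of M_A. -/

import Mathlib

open scoped InnerProductSpace

/-- The pair `(M_A, M_B)` of von Neumann algebras has the *Uhlmann property* if any two
unit vectors inducing the same state on `M_A` can be mapped onto each other, up to
arbitrarily small error, by unitaries of `M_B`. -/
def UhlmannProperty {H : Type*} [NormedAddCommGroup H] [InnerProductSpace ℂ H]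
    [CompleteSpace H] (M_A M_B : VonNeumannAlgebra H) : Prop :=
  ∀ Ψ Φ : H, ‖Ψ‖ = 1 → ‖Φ‖ = 1 →
    (∀ a ∈ M_A, ⟪Ψ, a Ψ⟫_ℂ = ⟪Φ, a Φ⟫_ℂ) →
    ∀ ε : ℝ, 0 < ε →
      ∃ u ∈ M_B, star u * u = 1 ∧ u * star u = 1 ∧ ‖⟪Ψ, u Φ⟫_ℂ‖ ≥ 1 - ε

section Aux

variable {H : Type*} [NormedAddCommGroup H] [InnerProductSpace ℂ H] [CompleteSpace H]

/-- The commutant of a von Neumann algebra is norm-closed. -/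
lemma UhlmannAux.commutant_isClosed (M : VonNeumannAlgebra H) :
    IsClosed ((M.commutant : Set (H →L[ℂ] H))) := by
  rw [VonNeumannAlgebra.coe_commutant]
  have h : Set.centralizer (M : Set (H →L[ℂ] H)) =
      ⋂ g ∈ (M : Set (H →L[ℂ] H)), {z : H →L[ℂ] H | g * z = z * g} := by
    ext z
    simp [Set.mem_centralizer_iff]
  rw [h]
  refine isClosed_biInter fun g _ => ?_
  exact isClosed_eq (continuous_const.mul continuous_id) (continuous_id.mul continuous_const)

/-- The continuous functional calculus of a self-adjoint element of the commutant stays in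
the commutant. -/
lemma UhlmannAux.cfc_mem_commutant (M : VonNeumannAlgebra H) {a : H →L[ℂ] H}
    (hmem : a ∈ M.commutant) (hsa : IsSelfAdjoint a) {f : ℂ → ℂ} (hf : Continuous f) :
    cfc f a ∈ M.commutant := by
  have hsn : IsStarNormal a := hsa.isStarNormal
  have h1 : cfc f a ∈ StarAlgebra.elemental ℂ a := by
    rw [cfc_apply f a hsn hf.continuousOn, cfcHom_eq_of_isStarNormal]
    exact SetLike.coe_mem _
  exact StarAlgebra.elemental.le_of_mem (UhlmannAux.commutant_isClosed M) hmem h1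

/-- Every self-adjoint contraction in the commutant is the real part of a unitary of the
commutant. -/
lemma UhlmannAux.exists_unitary_decomp (M : VonNeumannAlgebra H) {a : H →L[ℂ] H}
    (hmem : a ∈ M.commutant) (hsa : IsSelfAdjoint a) (hnorm : ‖a‖ ≤ 1) :
    ∃ u : H →L[ℂ] H, u ∈ M.commutant ∧ star u * u = 1 ∧ u * star u = 1 ∧
      u + star u = (2 : ℂ) • a := by
  have hsn : IsStarNormal a := hsa.isStarNormal
  set f : ℂ → ℂ := fun z => (z.re : ℂ) + Complex.I * (Real.sqrt (1 - z.re ^ 2) : ℝ) with hfdef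
  have hfc : Continuous f := by
    apply Continuous.add
    · exact Complex.continuous_ofReal.comp Complex.continuous_re
    · exact continuous_const.mul <| Complex.continuous_ofReal.comp <|
        Real.continuous_sqrt.comp <| (continuous_const.sub
          ((Complex.continuous_re).pow 2))
  have hspec : ∀ x ∈ spectrum ℂ a, x.im = 0 ∧ |x.re| ≤ 1 := by
    intro x hx
    refine ⟨hsa.im_eq_zero_of_mem_spectrum hx, ?_⟩
    have h1 := Complex.abs_re_le_norm x
    have h2 := spectrum.norm_le_norm_mul_of_mem hx
    have h3 : ‖(1 : H →L[ℂ] H)‖ ≤ 1 := by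
      rw [ContinuousLinearMap.one_def]; exact ContinuousLinearMap.norm_id_le
    have h4 : ‖a‖ * ‖(1 : H →L[ℂ] H)‖ ≤ 1 :=
      mul_le_one₀ hnorm (norm_nonneg _) h3
    linarith
  have hunit : cfc f a ∈ unitary (H →L[ℂ] H) := by
    rw [cfc_unitary_iff f a hsn hfc.continuousOn]
    intro x hx
    obtain ⟨him, hre⟩ := hspec x hx
    obtain ⟨hre1, hre2⟩ := abs_le.mp hre
    have h01 : (0:ℝ) ≤ 1 - x.re ^ 2 := by nlinarith
    have hs : Real.sqrt (1 - x.re ^ 2) * Real.sqrt (1 - x.re ^ 2) = 1 - x.re ^ 2 :=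
      Real.mul_self_sqrt h01
    have hkey : star (f x) * f x = ((Complex.normSq (f x) : ℝ) : ℂ) := by
      rw [Complex.normSq_eq_conj_mul_self]; rfl
    rw [hkey]
    have hre' : (f x).re = x.re := by simp [hfdef]
    have him' : (f x).im = Real.sqrt (1 - x.re ^ 2) := by simp [hfdef]
    rw [Complex.normSq_apply, hre', him', hs]
    push_cast
    ring
  have hadd : cfc f a + star (cfc f a) = (2 : ℂ) • a := by
    rw [← cfc_star f a, ← cfc_add a f _ hfc.continuousOn hfc.continuousOn.star]
    have heq : (spectrum ℂ a).EqOn (fun z => f z + star (f z)) (fun z => (2 : ℂ) • z) := by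
      intro x hx
      obtain ⟨him, _⟩ := hspec x hx
      have hxre : (x.re : ℂ) = x := Complex.ext (by simp) (by simp [him])
      show f x + star (f x) = (2 : ℂ) • x
      simp only [hfdef, star_add, star_mul, Complex.star_def, Complex.conj_ofReal,
        Complex.conj_I]
      rw [smul_eq_mul]
      conv_rhs => rw [← hxre]
      ring
    rw [cfc_congr heq, cfc_smul_id (2 : ℂ) a]
  exact ⟨cfc f a, UhlmannAux.cfc_mem_commutant M hmem hsa hfc,
    (Unitary.mem_iff.mp hunit).1, (Unitary.mem_iff.mp hunit).2, hadd⟩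

end Aux

/-- Under the Uhlmann property, the orthogonal projection onto the cyclic subspace
`closure (span {b Ψ | b ∈ M_B})` belongs to `M_A`, for every vector `Ψ`. -/
theorem cyclic_projection_mem_of_uhlmann {H : Type*} [NormedAddCommGroup H]
    [InnerProductSpace ℂ H] [CompleteSpace H]
    (M_A M_B : VonNeumannAlgebra H)
    (hcomm : ∀ a ∈ M_A, ∀ b ∈ M_B, a * b = b * a)
    (huhlmann : UhlmannProperty M_A M_B) :
    ∀ Ψ : H,
      ((Submodule.span ℂ {x : H | ∃ b ∈ M_B, b Ψ = x}).topologicalClosure).subtypeL.comp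
        (Submodule.orthogonalProjectionOnto
          (Submodule.span ℂ {x : H | ∃ b ∈ M_B, b Ψ = x}).topologicalClosure) ∈ M_A := by
  intro Ψ
  set S : Set H := {x : H | ∃ b ∈ M_B, b Ψ = x} with hSdef
  set K : Submodule ℂ H := (Submodule.span ℂ S).topologicalClosure with hKdef
  have hKc : IsClosed (K : Set H) := Submodule.isClosed_topologicalClosure _
  have hSK : S ⊆ (K : Set H) := fun x hx =>
    Submodule.le_topologicalClosure _ (Submodule.subset_span hx)
  -- Step A : unitaries of the commutant of `M_A` map `Ψ` into `K`.
  have stepA : ∀ u : H →L[ℂ] H, u ∈ M_A.commutant → star u * u = 1 → u * star u = 1 →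
      u Ψ ∈ K := by
    intro u humem huu huu'
    -- isometries
    have hiso : ∀ v : H →L[ℂ] H, star v * v = 1 → ∀ x : H, ‖v x‖ = ‖x‖ := by
      intro v hv x
      have h1 : ⟪v x, v x⟫_ℂ = ⟪x, x⟫_ℂ := by
        have h3 : (ContinuousLinearMap.adjoint v) (v x) = x := by
          have := congrArg (fun T : H →L[ℂ] H => T x) hv
          simpa [ContinuousLinearMap.mul_apply, ContinuousLinearMap.star_eq_adjoint]
            using this
        have h2 := ContinuousLinearMap.adjoint_inner_right v x (v x)
        rw [h3] at h2
        exact h2.symm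
      rw [inner_self_eq_norm_sq_to_K, inner_self_eq_norm_sq_to_K] at h1
      have h4 : (‖v x‖ : ℝ) ^ 2 = ‖x‖ ^ 2 := by exact_mod_cast h1
      nlinarith [norm_nonneg (v x), norm_nonneg x]
    by_cases hΨz : Ψ = 0
    · rw [hΨz, map_zero]; exact K.zero_mem
    · have hn : ‖Ψ‖ ≠ 0 := norm_ne_zero_iff.mpr hΨz
      set c : ℂ := ((‖Ψ‖ : ℂ))⁻¹ with hcdef
      have hc0 : c ≠ 0 := by
        simp [hcdef, Complex.ofReal_ne_zero, hn]
      set Ψ₀ : H := c • Ψ with hΨ₀def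
      have hΨ₀ : ‖Ψ₀‖ = 1 := by
        rw [hΨ₀def, norm_smul, hcdef, norm_inv, Complex.norm_real, Real.norm_eq_abs,
          abs_of_nonneg (norm_nonneg Ψ)]
        field_simp
      have hΦ : ‖u Ψ₀‖ = 1 := by rw [hiso u huu, hΨ₀]
      -- equality of states
      have hstate : ∀ a ∈ M_A, ⟪Ψ₀, a Ψ₀⟫_ℂ = ⟪u Ψ₀, a (u Ψ₀)⟫_ℂ := by
        intro a ha
        have hcomm' : a * u = u * a := VonNeumannAlgebra.mem_commutant_iff.mp humem a ha
        have key : star u * (a * u) = a := by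
          rw [hcomm', ← mul_assoc, huu, one_mul]
        have h5 : (ContinuousLinearMap.adjoint u) (a (u Ψ₀)) = a Ψ₀ := by
          have := congrArg (fun T : H →L[ℂ] H => T Ψ₀) key
          simpa [ContinuousLinearMap.mul_apply, ContinuousLinearMap.star_eq_adjoint]
            using this
        have h6 := ContinuousLinearMap.adjoint_inner_right u Ψ₀ (a (u Ψ₀))
        rw [h5] at h6
        exact h6
      -- it suffices to show `u Ψ₀ ∈ K`
      suffices h7 : u Ψ₀ ∈ K by
        have h8 : u Ψ = (‖Ψ‖ : ℂ) • u Ψ₀ := by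
          rw [hΨ₀def, map_smul, smul_smul, hcdef]
          rw [mul_inv_cancel₀ (by simpa [Complex.ofReal_ne_zero] using hn), one_smul]
        rw [h8]
        exact K.smul_mem _ h7
      -- via the Uhlmann property
      have hcl : u Ψ₀ ∈ closure (K : Set H) := by
        rw [Metric.mem_closure_iff]
        intro δ hδ
        obtain ⟨v, hvB, hvv, hvv', hvbig⟩ :=
          huhlmann Ψ₀ (u Ψ₀) hΨ₀ hΦ hstate (δ ^ 2 / 4) (by positivity)
        set w : H := (star v) Ψ₀ with hwdef
        have hwK : w ∈ (K : Set H) := by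
          have h9 : (star v) Ψ ∈ S := ⟨star v, star_mem hvB, rfl⟩
          have h10 : w = c • ((star v) Ψ) := by rw [hwdef, hΨ₀def, map_smul]
          rw [h10]
          exact K.smul_mem _ (hSK h9)
        have hw1 : ‖w‖ = 1 := by
          have : star (star v) * star v = 1 := by rwa [star_star]
          rw [hwdef, hiso (star v) this, hΨ₀]
        set t : ℂ := ⟪w, u Ψ₀⟫_ℂ with htdef
        have ht : ‖t‖ ≥ 1 - δ ^ 2 / 4 := by
          have h11 : ⟪Ψ₀, v (u Ψ₀)⟫_ℂ = t := by
            rw [htdef, hwdef, ContinuousLinearMap.star_eq_adjoint,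
              ContinuousLinearMap.adjoint_inner_left]
          rwa [h11] at hvbig
        have ht1 : ‖t‖ ≤ 1 := by
          calc ‖t‖ ≤ ‖w‖ * ‖u Ψ₀‖ := norm_inner_le_norm w (u Ψ₀)
          _ = 1 := by rw [hw1, hΦ]; ring
        refine ⟨t • w, K.smul_mem t hwK, ?_⟩
        have hiw : ⟪u Ψ₀, w⟫_ℂ = (starRingEnd ℂ) t := by
          rw [htdef, ← inner_conj_symm]
        have h12 : ‖u Ψ₀ - t • w‖ ^ 2 = 1 - ‖t‖ ^ 2 := by
          rw [@norm_sub_sq ℂ, inner_smul_right, hiw, Complex.mul_conj, hΦ, norm_smul,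
            hw1]
          simp [Complex.normSq_eq_norm_sq, ← Complex.ofReal_pow]
          ring
        have h13 : ‖u Ψ₀ - t • w‖ ^ 2 < δ ^ 2 := by
          rw [h12]
          nlinarith
        rw [dist_eq_norm]
        exact lt_of_pow_lt_pow_left₀ 2 (le_of_lt hδ) h13
      rw [← SetLike.mem_coe, ← hKc.closure_eq]
      exact hcl
  -- Step B : every element of the commutant of `M_A` maps `Ψ` into `K`.
  have hsmul : ∀ (r : ℂ) (x : H →L[ℂ] H), x ∈ M_A.commutant → r • x ∈ M_A.commutant := by
    intro r x hx
    rw [VonNeumannAlgebra.mem_commutant_iff] at hx ⊢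
    intro g hg
    rw [mul_smul_comm, hx g hg, ← smul_mul_assoc]
  have stepB : ∀ T ∈ M_A.commutant, T Ψ ∈ K := by
    have hsa_case : ∀ s : H →L[ℂ] H, s ∈ M_A.commutant → IsSelfAdjoint s → s Ψ ∈ K := by
      intro s hs hsa
      by_cases h0 : s = 0
      · rw [h0]; simpa using K.zero_mem
      · have hn : ‖s‖ ≠ 0 := norm_ne_zero_iff.mpr h0
        set s' : H →L[ℂ] H := ((‖s‖ : ℂ))⁻¹ • s with hs'def
        have hs'mem : s' ∈ M_A.commutant := hsmul _ _ hs
        have hs'sa : IsSelfAdjoint s' := by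
          rw [hs'def, IsSelfAdjoint, star_smul, hsa.star_eq]
          congr 1
          simp [← Complex.ofReal_inv]
        have hs'norm : ‖s'‖ ≤ 1 := by
          rw [hs'def, norm_smul, norm_inv, Complex.norm_real, Real.norm_eq_abs,
            abs_of_nonneg (norm_nonneg s)]
          field_simp
          exact le_rfl
        obtain ⟨u, humem, huu, huu', hsum⟩ :=
          UhlmannAux.exists_unitary_decomp M_A hs'mem hs'sa hs'norm
        have hu1 : u Ψ ∈ K := stepA u humem huu huu'
        have hu2 : (star u) Ψ ∈ K := by
          refine stepA (star u) (star_mem humem) ?_ ?_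
          · rwa [star_star]
          · rwa [star_star]
        have h14 : (2 : ℂ) • s' Ψ = u Ψ + (star u) Ψ := by
          have := congrArg (fun T : H →L[ℂ] H => T Ψ) hsum
          simpa using this.symm
        have h15 : s' Ψ ∈ K := by
          have h16 : s' Ψ = (2 : ℂ)⁻¹ • ((2 : ℂ) • s' Ψ) := by
            rw [smul_smul]; norm_num
          rw [h16, h14]
          exact K.smul_mem _ (K.add_mem hu1 hu2)
        have h17 : s Ψ = (‖s‖ : ℂ) • s' Ψ := by
          rw [hs'def]
          simp only [ContinuousLinearMap.smul_apply, smul_smul]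
          rw [mul_inv_cancel₀ (by simpa [Complex.ofReal_ne_zero] using hn), one_smul]
        rw [h17]
        exact K.smul_mem _ h15
    intro T hT
    set b : H →L[ℂ] H := (2⁻¹ : ℂ) • (T + star T) with hbdef
    set d : H →L[ℂ] H := (-(2⁻¹ : ℂ) * Complex.I) • (T - star T) with hddef
    have hbmem : b ∈ M_A.commutant := hsmul _ _ (add_mem hT (star_mem hT))
    have hdmem : d ∈ M_A.commutant := hsmul _ _ (sub_mem hT (star_mem hT))
    have hbsa : IsSelfAdjoint b := by
      rw [hbdef, IsSelfAdjoint, star_smul, star_add, star_star]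
      rw [add_comm (star T) T]
      congr 1
      simp [Complex.ext_iff]
    have hdsa : IsSelfAdjoint d := by
      rw [hddef, IsSelfAdjoint, star_smul, star_sub, star_star]
      have h18 : star (-(2⁻¹ : ℂ) * Complex.I) = (2⁻¹ : ℂ) * Complex.I := by
        simp [Complex.ext_iff]
      rw [h18]
      have h19 : ((2⁻¹ : ℂ) * Complex.I) • (star T - T)
          = (-(2⁻¹ : ℂ) * Complex.I) • (T - star T) := by
        rw [← neg_sub T (star T), smul_neg, ← neg_smul, neg_mul]
      rw [h19]
    have hTbd : T = b + Complex.I • d := by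
      rw [hbdef, hddef, smul_smul]
      have h20 : Complex.I * (-(2⁻¹ : ℂ) * Complex.I) = (2⁻¹ : ℂ) := by
        rw [mul_comm, mul_assoc, Complex.I_mul_I]
        norm_num
      rw [h20, smul_add, smul_sub]
      have h21 : (2⁻¹ : ℂ) • T + (2⁻¹ : ℂ) • star T
          + ((2⁻¹ : ℂ) • T - (2⁻¹ : ℂ) • star T) = (2⁻¹ : ℂ) • T + (2⁻¹ : ℂ) • T := by
        abel
      rw [h21, ← add_smul]
      norm_num
    have hbΨ : b Ψ ∈ K := hsa_case b hbmem hbsa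
    have hdΨ : d Ψ ∈ K := hsa_case d hdmem hdsa
    rw [hTbd]
    simp only [ContinuousLinearMap.add_apply, ContinuousLinearMap.smul_apply]
    exact K.add_mem hbΨ (K.smul_mem _ hdΨ)
  -- Step C : `K` is invariant under the commutant of `M_A`.
  have stepC : ∀ T ∈ M_A.commutant, ∀ x ∈ K, T x ∈ K := by
    intro T hT
    have hgen : ∀ x ∈ S, T x ∈ K := by
      rintro x ⟨bb, hbb, rfl⟩
      have hbbmem : bb ∈ M_A.commutant :=
        VonNeumannAlgebra.mem_commutant_iff.mpr fun a ha => hcomm a ha bb hbb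
      have : (T * bb) Ψ ∈ K := stepB (T * bb) (mul_mem hT hbbmem)
      simpa [ContinuousLinearMap.mul_apply] using this
    have hspan : Submodule.span ℂ S ≤ K.comap (T : H →ₗ[ℂ] H) := by
      rw [Submodule.span_le]
      intro x hx
      exact hgen x hx
    have hclosed : IsClosed ((K.comap (T : H →ₗ[ℂ] H) : Submodule ℂ H) : Set H) :=
      hKc.preimage T.continuous
    have := Submodule.topologicalClosure_minimal (Submodule.span ℂ S) hspan hclosed
    intro x hx
    exact this hx
  -- Step D : conclusion.
  rw [← M_A.commutant_commutant, VonNeumannAlgebra.mem_commutant_iff]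
  intro g hg
  ext x
  have hgK := stepC g hg
  have hg'K := stepC (star g) (star_mem hg)
  set y : H := (Submodule.orthogonalProjectionOnto K x : H) with hydef
  have hy : y ∈ K := SetLike.coe_mem _
  have hxy : x - y ∈ Kᗮ := K.sub_starProjection_mem_orthogonal x
  have h1 : g y ∈ K := hgK y hy
  have h2 : g (x - y) ∈ Kᗮ := by
    rw [Submodule.mem_orthogonal]
    intro k hk
    have h3 : ⟪(ContinuousLinearMap.adjoint g) k, x - y⟫_ℂ = ⟪k, g (x - y)⟫_ℂ :=
      ContinuousLinearMap.adjoint_inner_left g (x - y) k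
    rw [← h3]
    have h4 : (ContinuousLinearMap.adjoint g) k ∈ K := by
      rw [← ContinuousLinearMap.star_eq_adjoint]
      exact hg'K k hk
    exact (Submodule.mem_orthogonal K (x - y)).mp hxy _ h4
  have h5 : (Submodule.orthogonalProjectionOnto K (g x) : H) = g y := by
    have hgx : g x = g y + g (x - y) := by rw [← map_add]; congr 1; abel
    rw [hgx, map_add, Submodule.orthogonalProjectionOnto_apply_of_mem_orthogonal h2,
      add_zero]
    exact Submodule.starProjection_eq_self_iff.mpr h1
  simp only [ContinuousLinearMap.mul_apply, ContinuousLinearMap.comp_apply,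
    Submodule.subtypeL_apply]
  rw [h5, ← hydef]
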